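/- For every ε > 0 the function ω ↦ e^{−ω²/2}/(−iε − ω) is Lebesgue integrable on ℝ, and as ε → 0⁺ one has (1/(2πi)) · ∫_ℝ e^{−ω²/2}/(−iε − ω) dω → 1/2 and (1/(2πi)) · ∫_ℝ e^{−ω²/2}/(iε − ω) dω → −1/2. (These limits are the boundary values G^r(0) = 1/2 and G^l(0) = −1/2 of the right and left variants of the Hilbert transform of the Gaussian.) -/

import Mathlib

open Complex MeasureTheory

noncomputable def Vint (ε : ℝ) : ℝ := ∫ ω : ℝ, ε * Real.exp (-ω^2/2) / (ω^2 + ε^2)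

lemma gauss_integrable : Integrable (fun ω : ℝ => Real.exp (-ω^2/2)) := by
  have := integrable_exp_neg_mul_sq (by norm_num : (0:ℝ) < 1/2)
  refine this.congr (Filter.Eventually.of_forall fun x => ?_)
  ring_nf

lemma gaussC_norm (ω : ℝ) : Complex.exp (-(ω:ℂ)^2/2) = ((Real.exp (-ω^2/2) : ℝ) : ℂ) := by
  rw [Complex.ofReal_exp]
  congr 1
  push_cast
  ring

lemma v_integrable {ε : ℝ} (hε : 0 < ε) :
    Integrable (fun ω : ℝ => ε * Real.exp (-ω^2/2) / (ω^2 + ε^2)) := by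
  have hcont : Continuous fun ω : ℝ => ε * Real.exp (-ω^2/2) / (ω^2 + ε^2) := by
    apply Continuous.div
    · fun_prop
    · fun_prop
    · intro x; positivity
  refine (gauss_integrable.const_mul ε⁻¹).mono' hcont.aestronglyMeasurable
    (Filter.Eventually.of_forall fun ω => ?_)
  have h1 : (0:ℝ) < ω^2 + ε^2 := by positivity
  rw [Real.norm_eq_abs, _root_.abs_of_nonneg (by positivity)]
  rw [div_le_iff₀ h1]
  have hexp : (0:ℝ) < Real.exp (-ω^2/2) := Real.exp_pos _
  have h2 : ε * ε ≤ ω^2 + ε^2 := by nlinarith [sq_nonneg ω]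
  calc ε * Real.exp (-ω^2/2) = ε⁻¹ * Real.exp (-ω^2/2) * (ε * ε) := by
        field_simp
    _ ≤ ε⁻¹ * Real.exp (-ω^2/2) * (ω^2 + ε^2) := by
        apply mul_le_mul_of_nonneg_left h2; positivity

lemma odd_part_integral_zero {ε : ℝ} :
    (∫ ω : ℝ, -ω * Real.exp (-ω^2/2) / (ω^2 + ε^2)) = 0 := by
  set f : ℝ → ℝ := fun ω => -ω * Real.exp (-ω^2/2) / (ω^2 + ε^2) with hf
  have h1 : (∫ ω : ℝ, f (-ω)) = ∫ ω : ℝ, f ω := integral_neg_eq_self f volume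
  have h2 : ∀ ω : ℝ, f (-ω) = -f ω := by
    intro ω
    simp only [hf]
    ring_nf
  rw [funext h2] at h1
  rw [integral_neg] at h1
  linarith [h1]

lemma denom_ne_zero {ε : ℝ} (hε : ε ≠ 0) {s : ℂ} (hs : s.im ≠ 0) (ω : ℝ) :
    s * (ε:ℂ) - (ω:ℂ) ≠ 0 := by
  intro h
  have := congrArg Complex.im h
  simp [Complex.sub_im, Complex.mul_im] at this
  rcases this with h | h
  · exact hs h
  · exact hε h

lemma cplx_integrable {ε : ℝ} (hε : 0 < ε) {s : ℂ} (hs : s.im = 1 ∨ s.im = -1) :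
    Integrable (fun ω : ℝ => Complex.exp (-(ω:ℂ)^2/2) / (s * ε - ω)) := by
  have hsim : s.im ≠ 0 := by rcases hs with h | h <;> rw [h] <;> norm_num
  have hden : ∀ ω : ℝ, s * (ε:ℂ) - (ω:ℂ) ≠ 0 := denom_ne_zero hε.ne' hsim
  have hcont : Continuous fun ω : ℝ => Complex.exp (-(ω:ℂ)^2/2) / (s * ε - ω) := by
    apply Continuous.div
    · fun_prop
    · fun_prop
    · exact fun ω => hden ω
  refine (gauss_integrable.const_mul ε⁻¹).mono' hcont.aestronglyMeasurable
    (Filter.Eventually.of_forall fun ω => ?_)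
  rw [norm_div, gaussC_norm]
  have hnorm : ε ≤ ‖s * (ε:ℂ) - (ω:ℂ)‖ := by
    have h1 : |(s * (ε:ℂ) - (ω:ℂ)).im| ≤ ‖s * (ε:ℂ) - (ω:ℂ)‖ :=
      Complex.abs_im_le_norm _
    have h2 : (s * (ε:ℂ) - (ω:ℂ)).im = s.im * ε := by
      simp [Complex.sub_im, Complex.mul_im]
    rw [h2] at h1
    rcases hs with h | h <;> rw [h] at h1 <;>
      simpa [_root_.abs_of_pos hε, _root_.abs_of_nonneg hε.le] using h1
  have hpos : (0:ℝ) < ‖s * (ε:ℂ) - (ω:ℂ)‖ := lt_of_lt_of_le hε hnorm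
  rw [Complex.norm_real, Real.norm_eq_abs, _root_.abs_of_nonneg (Real.exp_pos _).le]
  rw [div_le_iff₀ hpos]
  calc Real.exp (-ω^2/2) = ε⁻¹ * Real.exp (-ω^2/2) * ε := by field_simp
    _ ≤ ε⁻¹ * Real.exp (-ω^2/2) * ‖s * (ε:ℂ) - (ω:ℂ)‖ := by
        apply mul_le_mul_of_nonneg_left hnorm; positivity

lemma pointwise_decomp {ε : ℝ} (hε : 0 < ε) {s : ℂ} (hs : s^2 = -1)
    (hsim : s.im = 1 ∨ s.im = -1) (ω : ℝ) :
    Complex.exp (-(ω:ℂ)^2/2) / (s * ε - ω)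
      = ((-ω * Real.exp (-ω^2/2) / (ω^2 + ε^2) : ℝ) : ℂ)
        + (-s) * ((ε * Real.exp (-ω^2/2) / (ω^2 + ε^2) : ℝ) : ℂ) := by
  have hsim' : s.im ≠ 0 := by rcases hsim with h | h <;> rw [h] <;> norm_num
  have hden : s * (ε:ℂ) - (ω:ℂ) ≠ 0 := denom_ne_zero hε.ne' hsim' ω
  have hq : (0:ℝ) < ω^2 + ε^2 := by positivity
  have hqC : ((ω:ℂ)^2 + (ε:ℂ)^2) ≠ 0 := by
    have : ((ω^2 + ε^2 : ℝ) : ℂ) ≠ 0 := by exact_mod_cast hq.ne'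
    push_cast at this
    exact this
  have hmul : (s * (ε:ℂ) - (ω:ℂ)) * (-s * (ε:ℂ) - (ω:ℂ)) = (ω:ℂ)^2 + (ε:ℂ)^2 := by
    linear_combination (-(ε:ℂ)^2) * hs
  have hinv : (s * (ε:ℂ) - (ω:ℂ))⁻¹ = (-s * (ε:ℂ) - (ω:ℂ)) / ((ω:ℂ)^2 + (ε:ℂ)^2) := by
    rw [eq_div_iff hqC, ← hmul, inv_mul_cancel_left₀ hden]
  rw [div_eq_mul_inv, hinv, gaussC_norm]
  push_cast
  field_simp
  ring

lemma integral_decomp {ε : ℝ} (hε : 0 < ε) {s : ℂ} (hs : s^2 = -1)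
    (hsim : s.im = 1 ∨ s.im = -1) :
    (∫ ω : ℝ, Complex.exp (-(ω:ℂ)^2/2) / (s * ε - ω)) = (-s) * ((Vint ε : ℝ) : ℂ) := by
  have hB : Integrable (fun ω : ℝ =>
      (-s) * ((ε * Real.exp (-ω^2/2) / (ω^2 + ε^2) : ℝ) : ℂ)) :=
    ((v_integrable hε).ofReal.const_mul (-s))
  have hf : Integrable (fun ω : ℝ => Complex.exp (-(ω:ℂ)^2/2) / (s * ε - ω)) :=
    cplx_integrable hε hsim
  have hA : Integrable (fun ω : ℝ =>
      ((-ω * Real.exp (-ω^2/2) / (ω^2 + ε^2) : ℝ) : ℂ)) := by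
    refine (hf.sub hB).congr (Filter.Eventually.of_forall fun ω => ?_)
    simp only [Pi.sub_apply]
    rw [pointwise_decomp hε hs hsim ω]
    ring
  calc (∫ ω : ℝ, Complex.exp (-(ω:ℂ)^2/2) / (s * ε - ω))
      = ∫ ω : ℝ, (((-ω * Real.exp (-ω^2/2) / (ω^2 + ε^2) : ℝ) : ℂ)
          + (-s) * ((ε * Real.exp (-ω^2/2) / (ω^2 + ε^2) : ℝ) : ℂ)) := by
        exact integral_congr_ae (Filter.Eventually.of_forall fun ω =>
          pointwise_decomp hε hs hsim ω)
    _ = (∫ ω : ℝ, ((-ω * Real.exp (-ω^2/2) / (ω^2 + ε^2) : ℝ) : ℂ))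
          + ∫ ω : ℝ, (-s) * ((ε * Real.exp (-ω^2/2) / (ω^2 + ε^2) : ℝ) : ℂ) :=
        integral_add hA hB
    _ = (-s) * ((Vint ε : ℝ) : ℂ) := by
        have hI1 : (∫ ω : ℝ, ((-ω * Real.exp (-ω^2/2) / (ω^2 + ε^2) : ℝ) : ℂ))
            = (((∫ ω : ℝ, -ω * Real.exp (-ω^2/2) / (ω^2 + ε^2)) : ℝ) : ℂ) := integral_ofReal
        have hI2 : (∫ ω : ℝ, ((ε * Real.exp (-ω^2/2) / (ω^2 + ε^2) : ℝ) : ℂ))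
            = (((∫ ω : ℝ, ε * Real.exp (-ω^2/2) / (ω^2 + ε^2)) : ℝ) : ℂ) := integral_ofReal
        rw [integral_const_mul, hI1, hI2, odd_part_integral_zero]
        simp [Vint]

lemma Vint_eq {ε : ℝ} (hε : 0 < ε) :
    Vint ε = ∫ t : ℝ, Real.exp (-(ε*t)^2/2) * (1 + t^2)⁻¹ := by
  have key := MeasureTheory.Measure.integral_comp_mul_left
    (fun ω : ℝ => ε * Real.exp (-ω^2/2) / (ω^2 + ε^2)) ε
  have hptw : ∀ t : ℝ, ε * Real.exp (-(ε*t)^2/2) / ((ε*t)^2 + ε^2)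
      = ε⁻¹ * (Real.exp (-(ε*t)^2/2) * (1 + t^2)⁻¹) := by
    intro t
    have h1 : (0:ℝ) < (ε*t)^2 + ε^2 := by positivity
    have h2 : (0:ℝ) < 1 + t^2 := by positivity
    field_simp
    ring
  rw [funext hptw] at key
  rw [integral_const_mul] at key
  have habs : |ε⁻¹| = ε⁻¹ := abs_of_pos (inv_pos.mpr hε)
  rw [habs, smul_eq_mul] at key
  have := mul_left_cancel₀ (inv_ne_zero hε.ne') key
  rw [Vint, ← this]

lemma Vint_tendsto :
    Filter.Tendsto Vint (nhdsWithin 0 (Set.Ioi 0)) (nhds Real.pi) := by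
  have hmain : Filter.Tendsto (fun ε : ℝ => ∫ t : ℝ, Real.exp (-(ε*t)^2/2) * (1 + t^2)⁻¹)
      (nhdsWithin 0 (Set.Ioi 0)) (nhds (∫ t : ℝ, (1 + t^2)⁻¹)) := by
    apply MeasureTheory.tendsto_integral_filter_of_dominated_convergence
      (fun t : ℝ => (1 + t^2)⁻¹)
    · apply Filter.Eventually.of_forall
      intro ε
      apply Continuous.aestronglyMeasurable
      have : Continuous fun t : ℝ => (1 + t^2)⁻¹ := by
        apply Continuous.inv₀ (by fun_prop)
        intro t; positivity
      fun_prop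
    · apply Filter.Eventually.of_forall
      intro ε
      apply Filter.Eventually.of_forall
      intro t
      have h2 : (0:ℝ) < 1 + t^2 := by positivity
      rw [Real.norm_eq_abs, _root_.abs_of_nonneg (by positivity)]
      have hexp : Real.exp (-(ε*t)^2/2) ≤ 1 := by
        rw [← Real.exp_zero]
        apply Real.exp_le_exp.mpr
        nlinarith [sq_nonneg (ε*t)]
      calc Real.exp (-(ε*t)^2/2) * (1 + t^2)⁻¹ ≤ 1 * (1 + t^2)⁻¹ := by
            apply mul_le_mul_of_nonneg_right hexp; positivity
        _ = (1 + t^2)⁻¹ := one_mul _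
    · exact integrable_inv_one_add_sq
    · apply Filter.Eventually.of_forall
      intro t
      apply Filter.Tendsto.mono_left _ nhdsWithin_le_nhds
      have hcont : Continuous fun ε : ℝ => Real.exp (-(ε*t)^2/2) * (1 + t^2)⁻¹ := by
        fun_prop
      have := hcont.tendsto 0
      simpa using this
  rw [integral_univ_inv_one_add_sq] at hmain
  apply hmain.congr'
  filter_upwards [self_mem_nhdsWithin] with ε hε
  exact (Vint_eq hε).symm

lemma final_const (V : ℂ) : (1/(2*(Real.pi:ℂ)*Complex.I)) * (Complex.I * V) = V / (2*Real.pi) := by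
  have hπ : (Real.pi : ℂ) ≠ 0 := Complex.ofReal_ne_zero.mpr Real.pi_ne_zero
  field_simp

/-- For every ε > 0 the function ω ↦ e^{−ω²/2}/(∓iε − ω) is integrable on ℝ,
and as ε → 0⁺, (1/(2πi))∫ e^{−ω²/2}/(−iε−ω) dω → 1/2 and
(1/(2πi))∫ e^{−ω²/2}/(iε−ω) dω → −1/2 (the boundary values G^r(0) = 1/2, G^l(0) = −1/2). -/
theorem stmt18 :
    (∀ ε : ℝ, 0 < ε →
      Integrable (fun ω : ℝ => Complex.exp (-(ω:ℂ)^2/2) / (-(Complex.I*ε) - ω)) ∧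
      Integrable (fun ω : ℝ => Complex.exp (-(ω:ℂ)^2/2) / (Complex.I*ε - ω))) ∧
    Filter.Tendsto
      (fun ε : ℝ => (1/(2*(Real.pi:ℂ)*Complex.I))
        * ∫ ω : ℝ, Complex.exp (-(ω:ℂ)^2/2) / (-(Complex.I*ε) - ω))
      (nhdsWithin 0 (Set.Ioi 0)) (nhds (1/2 : ℂ)) ∧
    Filter.Tendsto
      (fun ε : ℝ => (1/(2*(Real.pi:ℂ)*Complex.I))
        * ∫ ω : ℝ, Complex.exp (-(ω:ℂ)^2/2) / (Complex.I*ε - ω))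
      (nhdsWithin 0 (Set.Ioi 0)) (nhds (-(1/2) : ℂ)) := by
  have hsI : (Complex.I)^2 = -1 := Complex.I_sq
  have hsI' : ((-Complex.I))^2 = -1 := by rw [neg_sq]; exact Complex.I_sq
  have himI : (Complex.I).im = 1 ∨ (Complex.I).im = -1 := Or.inl Complex.I_im
  have himI' : ((-Complex.I)).im = 1 ∨ ((-Complex.I)).im = -1 := by
    right; simp
  have heq1 : ∀ ε : ℝ, (fun ω : ℝ => Complex.exp (-(ω:ℂ)^2/2) / (-(Complex.I*ε) - ω))
      = fun ω : ℝ => Complex.exp (-(ω:ℂ)^2/2) / ((-Complex.I) * ε - ω) := by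
    intro ε; funext ω; rw [neg_mul]
  have hπ : (Real.pi : ℂ) ≠ 0 := Complex.ofReal_ne_zero.mpr Real.pi_ne_zero
  -- the coerced limit of Vint
  have hVC : Filter.Tendsto (fun ε : ℝ => ((Vint ε : ℝ) : ℂ) / (2*Real.pi))
      (nhdsWithin 0 (Set.Ioi 0)) (nhds ((Real.pi : ℂ) / (2*Real.pi))) :=
    ((Complex.continuous_ofReal.tendsto _).comp Vint_tendsto).div_const _
  have hval : ((Real.pi : ℂ) / (2*Real.pi)) = 1/2 := by
    field_simp
  refine ⟨fun ε hε => ⟨?_, ?_⟩, ?_, ?_⟩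
  · rw [heq1 ε]; exact cplx_integrable hε himI'
  · exact cplx_integrable hε himI
  · -- right boundary value: limit 1/2
    rw [← hval] at *
    apply hVC.congr'
    filter_upwards [self_mem_nhdsWithin] with ε hε
    have hdec := integral_decomp hε hsI' himI'
    rw [heq1 ε, hdec]
    simp only [neg_neg]
    rw [final_const]
  · -- left boundary value: limit -1/2
    have hVC' : Filter.Tendsto (fun ε : ℝ => -(((Vint ε : ℝ) : ℂ) / (2*Real.pi)))
        (nhdsWithin 0 (Set.Ioi 0)) (nhds (-((Real.pi : ℂ) / (2*Real.pi)))) := hVC.neg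
    rw [hval] at hVC'
    apply hVC'.congr'
    filter_upwards [self_mem_nhdsWithin] with ε hε
    have hdec := integral_decomp hε hsI himI
    rw [hdec]
    rw [show (-Complex.I) * ((Vint ε : ℝ) : ℂ) = -(Complex.I * ((Vint ε : ℝ) : ℂ)) by ring,
      mul_neg, final_const]
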